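/- Let α_n, α, β_n, β ∈ D([0,∞),ℝ) with α_n → α and β_n → β in the J₁-topology, and suppose α and β have no common jump times. Then for every t ≥ 0 there exists a sequence t_n → t such that Δα_n(t_n) → Δα(t) and Δβ_n(t_n) → Δβ(t). -/

import Mathlib

open Filter Set
open scoped NNReal Topology

/-- A function `[0,∞) → E` is càdlàg: right-continuous with left limits. -/
def Cadlag {E : Type*} [TopologicalSpace E] (f : ℝ≥0 → E) : Prop :=
  ∀ t : ℝ≥0, ContinuousWithinAt f (Set.Ici t) t ∧
    ∃ l : E, Tendsto f (nhdsWithin t (Set.Iio t)) (𝓝 l)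

/-- Convergence in Skorokhod's J₁-topology on `D([0,∞), E)`. -/
def J1Tendsto {E : Type*} [NormedAddCommGroup E] (x : ℕ → ℝ≥0 → E) (y : ℝ≥0 → E) : Prop :=
  ∀ T : ℝ≥0, 0 < T → ∃ lam : ℕ → ℝ≥0 → ℝ≥0,
    (∀ n, Continuous (lam n) ∧ StrictMono (lam n) ∧ lam n 0 = 0 ∧
      Tendsto (lam n) atTop atTop) ∧
    (∀ ε : ℝ, 0 < ε → ∀ᶠ n in atTop, ∀ t ∈ Set.Icc (0 : ℝ≥0) T,
      ‖x n (lam n t) - y t‖ < ε ∧ |((lam n t : ℝ)) - (t : ℝ)| < ε)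

/-- The jump `Δf(t) := f(t) − f(t−)` of a path at time `t`. -/
noncomputable def jumpAt (f : ℝ≥0 → ℝ) (t : ℝ≥0) : ℝ :=
  f t - Function.leftLim f t


lemma nhds_lt_zero_bot : (𝓝[<] (0:ℝ≥0)) = ⊥ := by
  rw [show Iio (0:ℝ≥0) = ∅ from by ext x; simp, nhdsWithin_empty]

lemma leftLim_zero (f : ℝ≥0 → ℝ) : Function.leftLim f 0 = f 0 :=
  leftLim_eq_of_eq_bot f nhds_lt_zero_bot

lemma jumpAt_zero' (f : ℝ≥0 → ℝ) : f 0 - Function.leftLim f 0 = 0 := by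
  rw [leftLim_zero]; ring

lemma nhds_lt_neBot {t : ℝ≥0} (ht : 0 < t) : (𝓝[<] t).NeBot :=
  nhdsWithin_Iio_self_neBot' ⟨0, ht⟩

lemma surj_of (lam : ℝ≥0 → ℝ≥0) (hc : Continuous lam) (h0 : lam 0 = 0)
    (ht : Tendsto lam atTop atTop) : Function.Surjective lam := by
  intro y
  obtain ⟨M, hM⟩ := (ht.eventually (eventually_ge_atTop y)).exists
  have hy : y ∈ Icc (lam 0) (lam M) := ⟨by rw [h0]; exact zero_le, hM⟩
  obtain ⟨x, -, hx⟩ := intermediate_value_Icc (zero_le : (0:ℝ≥0) ≤ M) hc.continuousOn hy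
  exact ⟨x, hx⟩

lemma map_nhds_lt (e : ℝ≥0 ≃o ℝ≥0) (t : ℝ≥0) :
    Filter.map e (𝓝[<] t) = 𝓝[<] (e t) := by
  have := e.toHomeomorph.isEmbedding.map_nhdsWithin_eq (Iio t) t
  simpa [e.image_Iio] using this

lemma tendsto_leftLim_cadlag {f : ℝ≥0 → ℝ} (hf : Cadlag f) (t : ℝ≥0) :
    Tendsto f (𝓝[<] t) (𝓝 (Function.leftLim f t)) := by
  rcases eq_or_ne t 0 with rfl | ht
  · rw [nhds_lt_zero_bot]; exact tendsto_bot
  · haveI := nhds_lt_neBot (pos_iff_ne_zero.mpr ht)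
    obtain ⟨l, hl⟩ := (hf t).2
    rwa [leftLim_eq_of_tendsto hl]

lemma leftLim_comp (e : ℝ≥0 ≃o ℝ≥0) {f : ℝ≥0 → ℝ} (hf : Cadlag f) (t : ℝ≥0) :
    Function.leftLim (f ∘ e) t = Function.leftLim f (e t) := by
  rcases eq_or_ne t 0 with rfl | ht
  · have he0 : e 0 = 0 := by
      have := e.map_bot (β := ℝ≥0); simpa using this
    rw [leftLim_zero, he0, leftLim_zero]; simp [Function.comp, he0]
  · haveI := nhds_lt_neBot (pos_iff_ne_zero.mpr ht)
    have h2 : Tendsto (f ∘ e) (𝓝[<] t) (𝓝 (Function.leftLim f (e t))) := by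
      have := tendsto_leftLim_cadlag hf (e t)
      rw [← map_nhds_lt e t] at this
      exact this
    exact leftLim_eq_of_tendsto h2

lemma jumpAt_comp (e : ℝ≥0 ≃o ℝ≥0) {f : ℝ≥0 → ℝ} (hf : Cadlag f) (t : ℝ≥0) :
    jumpAt (f ∘ e) t = jumpAt f (e t) := by
  rw [jumpAt, jumpAt, leftLim_comp e hf t]; rfl

lemma tendsto_leftLim_comp (e : ℝ≥0 ≃o ℝ≥0) {f : ℝ≥0 → ℝ} (hf : Cadlag f) (t : ℝ≥0) :
    Tendsto (f ∘ e) (𝓝[<] t) (𝓝 (Function.leftLim (f ∘ e) t)) := by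
  rw [leftLim_comp e hf t]
  have := tendsto_leftLim_cadlag hf (e t)
  rw [← map_nhds_lt e t] at this
  exact this

lemma leftLim_sub_le {f g : ℝ≥0 → ℝ} {r T : ℝ≥0} {ε : ℝ}
    (hf : Tendsto f (𝓝[<] r) (𝓝 (Function.leftLim f r)))
    (hg : Tendsto g (𝓝[<] r) (𝓝 (Function.leftLim g r)))
    (hrT : r ≤ T)
    (hb : ∀ s ∈ Icc (0:ℝ≥0) T, |f s - g s| ≤ ε) :
    |Function.leftLim f r - Function.leftLim g r| ≤ ε := by
  rcases eq_or_ne r 0 with rfl | hr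
  · rw [leftLim_zero, leftLim_zero]
    exact hb 0 ⟨le_rfl, zero_le⟩
  · haveI := nhds_lt_neBot (pos_iff_ne_zero.mpr hr)
    have h : Tendsto (fun s => |f s - g s|) (𝓝[<] r)
        (𝓝 |Function.leftLim f r - Function.leftLim g r|) := (hf.sub hg).abs
    refine le_of_tendsto h ?_
    filter_upwards [self_mem_nhdsWithin] with s hs
    exact hb s ⟨zero_le, (le_of_lt hs).trans hrT⟩

lemma jump_small_near {β : ℝ≥0 → ℝ} (hβ : Cadlag β) {t : ℝ≥0} (h0 : jumpAt β t = 0)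
    {ε : ℝ} (hε : 0 < ε) : ∃ δ > 0, ∀ r : ℝ≥0, dist r t < δ → |jumpAt β r| ≤ ε := by
  have hε2 : 0 < ε/2 := by linarith
  have hR := (hβ t).1
  rw [Metric.continuousWithinAt_iff] at hR
  obtain ⟨δ₁, hδ₁, hR⟩ := hR (ε/2) hε2
  have hL : ∃ δ₂ > 0, ∀ s : ℝ≥0, s < t → dist s t < δ₂ → dist (β s) (β t) < ε/2 := by
    rcases eq_or_ne t 0 with rfl | ht
    · exact ⟨1, one_pos, fun s hs => absurd hs (by simp)⟩
    · have hlim : Function.leftLim β t = β t := by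
        have h1 : β t - Function.leftLim β t = 0 := h0
        linarith
      have h2 := tendsto_leftLim_cadlag hβ t
      rw [hlim, Metric.tendsto_nhdsWithin_nhds] at h2
      obtain ⟨δ₂, hδ₂, h2⟩ := h2 (ε/2) hε2
      exact ⟨δ₂, hδ₂, fun s hs hd => h2 hs hd⟩
  obtain ⟨δ₂, hδ₂, hL⟩ := hL
  set δ := min δ₁ δ₂ with hδdef
  have hδ : 0 < δ := lt_min hδ₁ hδ₂
  have P : ∀ s : ℝ≥0, dist s t < δ → |β s - β t| < ε/2 := by
    intro s hs
    rcases lt_or_ge s t with h | h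
    · have := hL s h (hs.trans_le (min_le_right _ _))
      rwa [Real.dist_eq] at this
    · have := hR h (hs.trans_le (min_le_left _ _))
      rwa [Real.dist_eq] at this
  refine ⟨δ/2, by linarith, fun r hr => ?_⟩
  have hv : |β r - β t| < ε/2 := P r (by linarith [dist_nonneg (x := r) (y := t)])
  have hll : |Function.leftLim β r - β t| ≤ ε/2 := by
    rcases eq_or_ne r 0 with rfl | hr0
    · rw [leftLim_zero]; exact le_of_lt hv
    · haveI := nhds_lt_neBot (pos_iff_ne_zero.mpr hr0)
      have htd : Tendsto (fun s => |β s - β t|) (𝓝[<] r)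
          (𝓝 |Function.leftLim β r - β t|) :=
        ((tendsto_leftLim_cadlag hβ r).sub tendsto_const_nhds).abs
      refine le_of_tendsto htd ?_
      filter_upwards [mem_nhdsWithin_of_mem_nhds (Metric.ball_mem_nhds r (by linarith : (0:ℝ) < δ/2))] with s hs
      have hsr : dist s r < δ/2 := Metric.mem_ball.mp hs
      have : dist s t < δ := by
        calc dist s t ≤ dist s r + dist r t := dist_triangle _ _ _
          _ < δ/2 + δ/2 := by linarith
          _ = δ := by ring
      exact le_of_lt (P s this)
  calc |jumpAt β r| = |β r - Function.leftLim β r| := rfl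
    _ ≤ |β r - β t| + |β t - Function.leftLim β r| := abs_sub_le _ _ _
    _ ≤ ε/2 + ε/2 := by
        rw [abs_sub_comm (β t)]
        exact add_le_add (le_of_lt hv) hll
    _ = ε := by ring

lemma key (a : ℕ → ℝ≥0 → ℝ) (alim : ℝ≥0 → ℝ) (b : ℕ → ℝ≥0 → ℝ) (blim : ℝ≥0 → ℝ)
    (hacad : ∀ n, Cadlag (a n)) (halim : Cadlag alim)
    (hbcad : ∀ n, Cadlag (b n)) (hblim : Cadlag blim)
    (hJa : J1Tendsto a alim) (hJb : J1Tendsto b blim)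
    {t : ℝ≥0} (ht : 0 < t) (hb0 : jumpAt blim t = 0) :
    ∃ tn : ℕ → ℝ≥0, Tendsto tn atTop (𝓝 t) ∧
      Tendsto (fun n => jumpAt (a n) (tn n)) atTop (𝓝 (jumpAt alim t)) ∧
      Tendsto (fun n => jumpAt (b n) (tn n)) atTop (𝓝 (jumpAt blim t)) := by
  set T : ℝ≥0 := t + 1 with hT
  have htT : t ≤ T := le_self_add
  have hT0 : 0 < T := lt_of_lt_of_le ht htT
  obtain ⟨la, hla, hla2⟩ := hJa T hT0
  obtain ⟨lb, hlb, hlb2⟩ := hJb T hT0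
  have hsa : ∀ n, Function.Surjective (la n) := fun n =>
    surj_of _ (hla n).1 (hla n).2.2.1 (hla n).2.2.2
  have hsb : ∀ n, Function.Surjective (lb n) := fun n =>
    surj_of _ (hlb n).1 (hlb n).2.2.1 (hlb n).2.2.2
  let ea : ℕ → ℝ≥0 ≃o ℝ≥0 := fun n =>
    StrictMono.orderIsoOfSurjective (la n) (hla n).2.1 (hsa n)
  let eb : ℕ → ℝ≥0 ≃o ℝ≥0 := fun n =>
    StrictMono.orderIsoOfSurjective (lb n) (hlb n).2.1 (hsb n)
  have hea : ∀ n s, ea n s = la n s := fun n s => rfl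
  have heb : ∀ n s, eb n s = lb n s := fun n s => rfl
  have tmem : t ∈ Icc (0:ℝ≥0) T := ⟨zero_le, htT⟩
  refine ⟨fun n => la n t, ?_, ?_, ?_⟩
  · rw [Metric.tendsto_nhds]
    intro ε hε
    filter_upwards [hla2 ε hε] with n hn
    rw [NNReal.dist_eq]
    exact (hn t tmem).2
  · rw [Metric.tendsto_nhds]
    intro ε hε
    have hε3 : 0 < ε/3 := by linarith
    filter_upwards [hla2 (ε/3) hε3] with n hn
    have heq : jumpAt (a n) (la n t) = jumpAt (a n ∘ ea n) t := by
      rw [jumpAt_comp (ea n) (hacad n) t, hea]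
    rw [Real.dist_eq, heq]
    have hval : |(a n ∘ ea n) t - alim t| < ε/3 := by
      have h := (hn t tmem).1
      rw [Real.norm_eq_abs] at h
      exact h
    have hLL : |Function.leftLim (a n ∘ ea n) t - Function.leftLim alim t| ≤ ε/3 := by
      refine leftLim_sub_le (tendsto_leftLim_comp (ea n) (hacad n) t)
        (tendsto_leftLim_cadlag halim t) htT (fun s hs => ?_)
      have h := (hn s hs).1
      rw [Real.norm_eq_abs] at h
      exact le_of_lt h
    calc |jumpAt (a n ∘ ea n) t - jumpAt alim t|
        = |((a n ∘ ea n) t - alim t) -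
            (Function.leftLim (a n ∘ ea n) t - Function.leftLim alim t)| := by
          rw [jumpAt, jumpAt]; ring_nf
      _ ≤ |(a n ∘ ea n) t - alim t| +
            |Function.leftLim (a n ∘ ea n) t - Function.leftLim alim t| := abs_sub _ _
      _ < ε := by linarith
  · rw [hb0, Metric.tendsto_nhds]
    intro ε hε
    obtain ⟨δ, hδ, hjump⟩ := jump_small_near hblim hb0 (by linarith : (0:ℝ) < ε/2)
    set ε' : ℝ := min (min (ε/8) (δ/4)) (1/4) with hε'def
    have hε'pos : 0 < ε' := lt_min (lt_min (by linarith) (by linarith)) (by norm_num)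
    have hε'1 : ε' ≤ ε/8 := le_trans (min_le_left _ _) (min_le_left _ _)
    have hε'2 : ε' ≤ δ/4 := le_trans (min_le_left _ _) (min_le_right _ _)
    have hε'3 : ε' ≤ 1/4 := min_le_right _ _
    filter_upwards [hlb2 ε' hε'pos, hla2 ε' hε'pos] with n hnb hna
    have htn : |((la n t : ℝ)) - t| < ε' := (hna t tmem).2
    set r : ℝ≥0 := (eb n).symm (la n t) with hrdef
    have hr : lb n r = la n t := (eb n).apply_symm_apply (la n t)
    have hrT : r ≤ T := by
      by_contra hc
      push_neg at hc
      have h1 : lb n T < lb n r := (hlb n).2.1 hc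
      have h2 : |((lb n T : ℝ)) - T| < ε' := (hnb T ⟨zero_le, le_rfl⟩).2
      have h4 : ((lb n T : ℝ)) < lb n r := by exact_mod_cast h1
      have h3 : ((lb n r : ℝ)) = la n t := by rw [hr]
      have hT' : ((T:ℝ)) = (t:ℝ) + 1 := by rw [hT]; push_cast; ring
      rw [hT'] at h2
      have habs1 := abs_lt.mp h2
      have habs2 := abs_lt.mp htn
      linarith [habs1.1, habs2.2]
    have hrmem : r ∈ Icc (0:ℝ≥0) T := ⟨zero_le, hrT⟩
    have h5 : |((lb n r : ℝ)) - r| < ε' := (hnb r hrmem).2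
    have hrt : dist r t < δ := by
      rw [NNReal.dist_eq]
      have h3 : ((lb n r : ℝ)) = la n t := by rw [hr]
      have htri : |(r:ℝ) - t| ≤ |(r:ℝ) - lb n r| + |((lb n r:ℝ)) - t| := abs_sub_le _ _ _
      rw [abs_sub_comm (r:ℝ) ((lb n r:ℝ))] at htri
      rw [h3] at htri h5
      linarith
    have heq : jumpAt (b n) (la n t) = jumpAt (b n ∘ eb n) r := by
      rw [jumpAt_comp (eb n) (hbcad n) r, (eb n).apply_symm_apply]
    have hval : |(b n ∘ eb n) r - blim r| ≤ ε' := by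
      have h := (hnb r hrmem).1
      rw [Real.norm_eq_abs] at h
      exact le_of_lt h
    have hLL : |Function.leftLim (b n ∘ eb n) r - Function.leftLim blim r| ≤ ε' := by
      refine leftLim_sub_le (tendsto_leftLim_comp (eb n) (hbcad n) r)
        (tendsto_leftLim_cadlag hblim r) hrT (fun s hs => ?_)
      have h := (hnb s hs).1
      rw [Real.norm_eq_abs] at h
      exact le_of_lt h
    have hjr : |jumpAt blim r| ≤ ε/2 := hjump r hrt
    rw [Real.dist_eq, sub_zero, heq]
    have hdiff : |jumpAt (b n ∘ eb n) r - jumpAt blim r| ≤ ε' + ε' := by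
      calc |jumpAt (b n ∘ eb n) r - jumpAt blim r|
          = |((b n ∘ eb n) r - blim r) -
              (Function.leftLim (b n ∘ eb n) r - Function.leftLim blim r)| := by
            rw [jumpAt, jumpAt]; ring_nf
        _ ≤ _ := abs_sub _ _
        _ ≤ ε' + ε' := add_le_add hval hLL
    calc |jumpAt (b n ∘ eb n) r|
        = |jumpAt blim r + (jumpAt (b n ∘ eb n) r - jumpAt blim r)| := by ring_nf
      _ ≤ |jumpAt blim r| + |jumpAt (b n ∘ eb n) r - jumpAt blim r| := abs_add_le _ _
      _ ≤ ε/2 + (ε' + ε') := add_le_add hjr hdiff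
      _ < ε := by linarith


/-- If `α_n → α` and `β_n → β` in the J₁-topology and `α, β`
have no common jump times, then for every `t ≥ 0` there exists `t_n → t` with
`Δα_n(t_n) → Δα(t)` and `Δβ_n(t_n) → Δβ(t)`. -/
theorem stmt6
    (a : ℕ → ℝ≥0 → ℝ) (alim : ℝ≥0 → ℝ) (b : ℕ → ℝ≥0 → ℝ) (blim : ℝ≥0 → ℝ)
    (hacad : ∀ n, Cadlag (a n)) (halim : Cadlag alim)
    (hbcad : ∀ n, Cadlag (b n)) (hblim : Cadlag blim)
    (hJa : J1Tendsto a alim) (hJb : J1Tendsto b blim)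
    (hnojump : ∀ t : ℝ≥0, 0 < t → jumpAt alim t * jumpAt blim t = 0) :
    ∀ t : ℝ≥0, ∃ tn : ℕ → ℝ≥0,
      Tendsto tn atTop (𝓝 t) ∧
      Tendsto (fun n => jumpAt (a n) (tn n)) atTop (𝓝 (jumpAt alim t)) ∧
      Tendsto (fun n => jumpAt (b n) (tn n)) atTop (𝓝 (jumpAt blim t)) := by
  intro t
  rcases eq_or_ne t 0 with rfl | ht0
  · refine ⟨fun _ => 0, tendsto_const_nhds, ?_, ?_⟩
    · simp only [jumpAt, jumpAt_zero']
      exact (tendsto_const_nhds : Tendsto (fun _ : ℕ => (0:ℝ)) atTop (𝓝 0))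
    · simp only [jumpAt, jumpAt_zero']
      exact (tendsto_const_nhds : Tendsto (fun _ : ℕ => (0:ℝ)) atTop (𝓝 0))
  · have ht : 0 < t := pos_iff_ne_zero.mpr ht0
    rcases mul_eq_zero.mp (hnojump t ht) with ha0 | hb0
    · obtain ⟨tn, h1, h3, h2⟩ := key b blim a alim hbcad hblim hacad halim hJb hJa ht ha0
      exact ⟨tn, h1, h2, h3⟩
    · exact key a alim b blim hacad halim hbcad hblim hJa hJb ht hb0
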